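/- Uniqueness: Suppose a fee sharing function f with f_i^k ≥ 0 and ∑_{i=1}^k f_i^k = F for all k ≥ 1 satisfies (i) f_k^{k+1} = C·f_k^k for all k ≥ 1 where C ∈ (0,1), (ii) f_i^k ≥ f_i^{k+1} for all i < k (permanence), and (iii) f_k^k ≥ f_k^{k+1} + f_{k+1}^{k+1} for all k ≥ 1 (Sybil-proofness). Then necessarily f_i^k = F·C·(1−C)^{i−1} for all i < k and f_k^k = F·(1−C)^{k−1}. -/

import Mathlib

lemma geo_sum_aux (F C : ℝ) : ∀ k : ℕ,
    ∑ i ∈ Finset.Icc 1 k, F * C * (1 - C) ^ (i - 1) = F * (1 - (1 - C) ^ k) := by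
  intro k
  induction k with
  | zero => simp
  | succ n ih =>
    rw [Finset.sum_Icc_succ_top (by omega : 1 ≤ n + 1), ih]
    simp only [Nat.add_sub_cancel]
    rw [pow_succ]
    ring

theorem stmt_9 (F C : ℝ) (hF : 0 < F) (hC : C ∈ Set.Ioo (0:ℝ) 1)
    (f : ℕ → ℕ → ℝ)
    (hnonneg : ∀ k i : ℕ, 0 ≤ f k i)
    (hsum : ∀ k : ℕ, 1 ≤ k → ∑ i ∈ Finset.Icc 1 k, f k i = F)
    (hinc : ∀ k : ℕ, 1 ≤ k → f (k + 1) k = C * f k k)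
    (hperm : ∀ k i : ℕ, 1 ≤ i → i < k → f k i ≥ f (k + 1) i)
    (hsybil : ∀ k : ℕ, 1 ≤ k → f k k ≥ f (k + 1) k + f (k + 1) (k + 1)) :
    (∀ k i : ℕ, 1 ≤ i → i < k → f k i = F * C * (1 - C) ^ (i - 1)) ∧
    (∀ k : ℕ, 1 ≤ k → f k k = F * (1 - C) ^ (k - 1)) := by
  have key : ∀ k : ℕ, 1 ≤ k →
      (∀ i : ℕ, 1 ≤ i → i < k → f k i = F * C * (1 - C) ^ (i - 1)) ∧
      f k k = F * (1 - C) ^ (k - 1) := by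
    intro k hk
    induction k, hk using Nat.le_induction with
    | base =>
      constructor
      · intro i hi hik; omega
      · have := hsum 1 le_rfl
        simpa using this
    | succ k hk1 ih =>
      obtain ⟨m, rfl⟩ : ∃ m, k = m + 1 := ⟨k - 1, by omega⟩
      set k := m + 1 with hkdef
      -- target function
      set h : ℕ → ℝ := fun i => if i = k + 1 then F * (1 - C) ^ k
        else F * C * (1 - C) ^ (i - 1) with hhdef
      have hsumh : ∑ i ∈ Finset.Icc 1 (k + 1), h i = F := by
        rw [Finset.sum_Icc_succ_top (by omega : 1 ≤ k + 1)]
        have h1 : ∑ i ∈ Finset.Icc 1 k, h i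
            = ∑ i ∈ Finset.Icc 1 k, F * C * (1 - C) ^ (i - 1) := by
          apply Finset.sum_congr rfl
          intro i hi
          simp only [Finset.mem_Icc] at hi
          simp only [hhdef, if_neg (by omega : ¬ i = k + 1)]
        rw [h1, geo_sum_aux]
        simp only [hhdef, if_pos rfl]
        ring
      have hle : ∀ i ∈ Finset.Icc 1 (k + 1), f (k + 1) i ≤ h i := by
        intro i hi
        simp only [Finset.mem_Icc] at hi
        rcases eq_or_lt_of_le hi.2 with heq | hlt
        · -- i = k + 1
          subst heq
          simp only [hhdef, if_pos rfl]
          have hs := hsybil k (by omega)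
          have hi2 := hinc k (by omega)
          have hkk := ih.2
          have : f (k + 1) (k + 1) ≤ (1 - C) * f k k := by
            rw [hi2] at hs; linarith
          calc f (k + 1) (k + 1) ≤ (1 - C) * f k k := this
            _ = (1 - C) * (F * (1 - C) ^ (k - 1)) := by rw [hkk]
            _ = F * (1 - C) ^ k := by
                have : (1 - C) ^ k = (1 - C) ^ (k - 1) * (1 - C) := by
                  rw [← pow_succ, Nat.sub_add_cancel (by omega : 1 ≤ k)]
                rw [this]; ring
        · have hik : i ≤ k := by omega
          simp only [hhdef, if_neg (by omega : ¬ i = k + 1)]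
          rcases eq_or_lt_of_le hik with heq2 | hlt2
          · -- i = k : equality via hinc
            rw [heq2, hinc k (by omega), ih.2]
            exact le_of_eq (by ring)
          · -- i < k
            have hp := hperm k i hi.1 hlt2
            have := ih.1 i hi.1 hlt2
            linarith
      have heqsum : ∑ i ∈ Finset.Icc 1 (k + 1), f (k + 1) i
          = ∑ i ∈ Finset.Icc 1 (k + 1), h i := by
        rw [hsum (k + 1) (by omega), hsumh]
      have hpt := (Finset.sum_eq_sum_iff_of_le hle).mp heqsum
      constructor
      · intro i hi1 hik
        have hmem : i ∈ Finset.Icc 1 (k + 1) := Finset.mem_Icc.mpr ⟨hi1, by omega⟩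
        have := hpt i hmem
        rw [this]
        simp [hhdef, if_neg (by omega : ¬ i = k + 1)]
      · have hmem : k + 1 ∈ Finset.Icc 1 (k + 1) := Finset.mem_Icc.mpr ⟨by omega, le_rfl⟩
        have := hpt (k + 1) hmem
        rw [this]
        simp [hhdef]
  constructor
  · intro k i hi hik
    exact (key k (by omega)).1 i hi hik
  · intro k hk
    exact (key k hk).2
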